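/- Let R be a commutative integral domain and let ⋆ be a semistar operation of finite type on R. If R satisfies the ascending chain condition on radical quasi-⋆-ideals, then ⋆-Min(I) is finite for every nonzero ideal I of R. -/

import Mathlib

open Pointwise

/-- A semistar operation on an integral domain `R` with quotient field `K`:
a map `E ↦ E^⋆` on the nonzero `R`-submodules of `K` satisfying the usual axioms.
(The map is defined on all submodules, but the axioms are only required for the
nonzero ones.) -/
structure SemistarOperation (R K : Type*) [CommRing R] [IsDomain R] [Field K]
    [Algebra R K] [IsFractionRing R K] where
  star : Submodule R K → Submodule R K
  smul_star : ∀ (x : K), x ≠ 0 → ∀ E : Submodule R K, E ≠ ⊥ → star (x • E) = x • star E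
  mono : ∀ E F : Submodule R K, E ≠ ⊥ → E ≤ F → star E ≤ star F
  le_star : ∀ E : Submodule R K, E ≠ ⊥ → E ≤ star E
  star_star : ∀ E : Submodule R K, E ≠ ⊥ → star (star E) = star E

namespace SemistarOperation

variable {R K : Type*} [CommRing R] [IsDomain R] [Field K] [Algebra R K] [IsFractionRing R K]
variable (s : SemistarOperation R K)

/-- `⋆` is of finite type: for every nonzero submodule `E`, the module `E^⋆` is the
union of the `F^⋆` over the nonzero finitely generated submodules `F ⊆ E`. -/
def FiniteType : Prop :=
  ∀ E : Submodule R K, E ≠ ⊥ → ∀ x : K,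
    x ∈ s.star E ↔ ∃ F : Submodule R K, F.FG ∧ F ≠ ⊥ ∧ F ≤ E ∧ x ∈ s.star F

/-- `I^⋆`, for an ideal `I` of `R` (viewing `I` as a submodule of `K`). -/
def idealStar (I : Ideal R) : Submodule R K :=
  s.star (Submodule.map (Algebra.linearMap R K) I)

/-- `I^⋆ ∩ R`, as an ideal of `R`. -/
def contract (I : Ideal R) : Ideal R :=
  Submodule.comap (Algebra.linearMap R K) (s.idealStar I)

/-- A (nonzero) ideal `I` of `R` is a quasi-`⋆`-ideal if `I^⋆ ∩ R = I`. -/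
def IsQuasiStarIdeal (I : Ideal R) : Prop :=
  I ≠ ⊥ ∧ s.contract I = I

/-- A nonzero ideal `L` of `R` is `⋆`-finite if `L^⋆ = F^⋆` for some nonzero
finitely generated ideal `F` of `R`. -/
def IsStarFinite (L : Ideal R) : Prop :=
  L ≠ ⊥ ∧ ∃ F : Ideal R, F.FG ∧ F ≠ ⊥ ∧ s.idealStar F = s.idealStar L

/-- `⋆` is stable: it distributes over finite intersections (of nonzero submodules
with nonzero intersection). -/
def Stable : Prop :=
  ∀ E F : Submodule R K, E ≠ ⊥ → F ≠ ⊥ → E ⊓ F ≠ ⊥ →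
    s.star (E ⊓ F) = s.star E ⊓ s.star F

/-- `⋆-Min(I)`: the set of quasi-`⋆`-prime ideals of `R` minimal over `I`. -/
def starMin (I : Ideal R) : Set (Ideal R) :=
  {P | Minimal (fun Q : Ideal R => Q.IsPrime ∧ s.IsQuasiStarIdeal Q ∧ I ≤ Q) P}

/-- A nonzero ideal `I` of `R` is a `⋆`-SFT-ideal if there are a finitely generated
ideal `J ⊆ I` and a positive integer `k` with `a ^ k ∈ J^⋆` for every `a ∈ I^⋆`. -/
def IsSFT (I : Ideal R) : Prop :=
  I ≠ ⊥ ∧ ∃ J : Ideal R, J.FG ∧ J ≤ I ∧ ∃ k : ℕ, 0 < k ∧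
    ∀ a ∈ s.idealStar I, a ^ k ∈ s.idealStar J

/-- `R` is a `⋆`-SFT-ring if every nonzero ideal of `R` is a `⋆`-SFT-ideal. -/
def IsSFTRing : Prop := ∀ I : Ideal R, I ≠ ⊥ → s.IsSFT I

end SemistarOperation

namespace SemistarOperation

variable {R K : Type*} [CommRing R] [IsDomain R] [Field K] [Algebra R K] [IsFractionRing R K]
variable (s : SemistarOperation R K)

private lemma mapf_ne_bot {I : Ideal R} (hI : I ≠ ⊥) :
    Submodule.map (Algebra.linearMap R K) I ≠ ⊥ := by
  intro h
  apply hI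
  have hinj : Function.Injective (Algebra.linearMap R K) := by
    intro x y hxy
    exact IsFractionRing.injective R K hxy
  exact Submodule.map_injective_of_injective hinj
    (h.trans (Submodule.map_bot (Algebra.linearMap R K)).symm)

private lemma star_ne_bot {E : Submodule R K} (hE : E ≠ ⊥) : s.star E ≠ ⊥ := by
  intro h
  exact hE (le_bot_iff.mp (h ▸ s.le_star E hE))

private lemma le_contract {I : Ideal R} (hI : I ≠ ⊥) : I ≤ s.contract I :=
  Submodule.map_le_iff_le_comap.mp
    (s.le_star (Submodule.map (Algebra.linearMap R K) I) (mapf_ne_bot hI))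

private lemma contract_ne_bot {I : Ideal R} (hI : I ≠ ⊥) : s.contract I ≠ ⊥ := by
  intro h
  exact hI (le_bot_iff.mp (h ▸ s.le_contract hI))

private lemma contract_mono {I J : Ideal R} (hI : I ≠ ⊥) (h : I ≤ J) :
    s.contract I ≤ s.contract J :=
  Submodule.comap_mono (s.mono _ _ (mapf_ne_bot hI) (Submodule.map_mono h))

private lemma idealStar_contract {I : Ideal R} (hI : I ≠ ⊥) :
    s.idealStar (s.contract I) = s.idealStar I := by
  have h1 : Submodule.map (Algebra.linearMap R K) I ≤
      Submodule.map (Algebra.linearMap R K) (s.contract I) :=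
    Submodule.map_mono (s.le_contract hI)
  have h2 : Submodule.map (Algebra.linearMap R K) (s.contract I) ≤ s.idealStar I :=
    Submodule.map_comap_le _ _
  show s.star _ = s.star _
  refine le_antisymm ?_ (s.mono _ _ (mapf_ne_bot hI) h1)
  have := s.mono _ _ (mapf_ne_bot (s.contract_ne_bot hI)) h2
  rwa [show s.star (s.idealStar I) = s.idealStar I from
    s.star_star _ (mapf_ne_bot hI)] at this

private lemma contract_isQuasi {I : Ideal R} (hI : I ≠ ⊥) :
    s.IsQuasiStarIdeal (s.contract I) := by
  refine ⟨s.contract_ne_bot hI, ?_⟩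
  show Submodule.comap _ (s.idealStar (s.contract I)) = _
  rw [s.idealStar_contract hI]
  rfl

private lemma mul_ne_bot {E F : Submodule R K} (hE : E ≠ ⊥) (hF : F ≠ ⊥) : E * F ≠ ⊥ := by
  obtain ⟨x, hxE, hx⟩ := Submodule.exists_mem_ne_zero_of_ne_bot hE
  obtain ⟨y, hyE, hy⟩ := Submodule.exists_mem_ne_zero_of_ne_bot hF
  intro h
  have : x * y ∈ E * F := Submodule.mul_mem_mul hxE hyE
  rw [h, Submodule.mem_bot] at this
  exact mul_ne_zero hx hy this

private lemma pow_ne_bot {E : Submodule R K} (hE : E ≠ ⊥) (n : ℕ) : E ^ n ≠ ⊥ := by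
  induction n with
  | zero =>
    intro h
    have : (1 : K) ∈ (E ^ 0 : Submodule R K) := by
      rw [pow_zero]; exact Submodule.one_le.mp le_rfl
    rw [h, Submodule.mem_bot] at this
    exact one_ne_zero this
  | succ n ih =>
    rw [pow_succ]
    exact mul_ne_bot ih hE

private lemma mul_star_le (E : Submodule R K) {F : Submodule R K} (hF : F ≠ ⊥) :
    E * s.star F ≤ s.star (E * F) := by
  rw [Submodule.mul_le]
  intro m hm n hn
  rcases eq_or_ne m 0 with rfl | hm0
  · rw [zero_mul]; exact zero_mem _
  have hsF : m • F ≠ ⊥ := by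
    intro h
    apply hF
    have := congrArg (fun G : Submodule R K => m⁻¹ • G) h
    simpa [smul_smul, inv_mul_cancel₀ hm0] using this
  have hmem : m * n ∈ s.star (m • F) := by
    rw [s.smul_star m hm0 F hF]
    exact Submodule.smul_mem_pointwise_smul n m (s.star F) hn
  refine s.mono _ _ hsF ?_ hmem
  intro z hz
  obtain ⟨w, hw, rfl⟩ := hz
  exact Submodule.mul_mem_mul hm hw

private lemma star_mul_star_le {E F : Submodule R K} (hE : E ≠ ⊥) (hF : F ≠ ⊥) :
    s.star E * s.star F ≤ s.star (E * F) := by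
  have h1 : s.star F * s.star E ≤ s.star (s.star F * E) := s.mul_star_le _ hE
  have h2 : s.star F * E ≤ s.star (E * F) := by
    rw [mul_comm]
    exact s.mul_star_le _ hF
  have h3 := s.mono _ _ (mul_ne_bot (s.star_ne_bot hF) hE) h2
  rw [s.star_star _ (mul_ne_bot hE hF)] at h3
  calc s.star E * s.star F = s.star F * s.star E := mul_comm _ _
    _ ≤ s.star (s.star F * E) := h1
    _ ≤ s.star (E * F) := h3

private lemma star_pow_le {E : Submodule R K} (hE : E ≠ ⊥) (n : ℕ) :
    (s.star E) ^ (n + 1) ≤ s.star (E ^ (n + 1)) := by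
  induction n with
  | zero => simpa using le_rfl
  | succ n ih =>
    rw [pow_succ ((s.star E)) (n+1), pow_succ E (n+1)]
    calc (s.star E) ^ (n + 1) * s.star E ≤ s.star (E ^ (n + 1)) * s.star E :=
        mul_le_mul' ih le_rfl
      _ ≤ s.star (E ^ (n + 1) * E) := s.star_mul_star_le (pow_ne_bot hE _) hE

private lemma map_ideal_pow (I : Ideal R) (n : ℕ) :
    Submodule.map (Algebra.linearMap R K) (I ^ n) =
      (Submodule.map (Algebra.linearMap R K) I) ^ n := by
  have : Algebra.linearMap R K = (Algebra.ofId R K).toLinearMap := rfl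
  rw [this, Submodule.map_pow]

private lemma radical_isQuasi (hs : s.FiniteType) {J : Ideal R}
    (hJ : s.IsQuasiStarIdeal J) : s.IsQuasiStarIdeal J.radical := by
  obtain ⟨hJ0, hJc⟩ := hJ
  have hrad0 : J.radical ≠ ⊥ := fun h => hJ0 (le_bot_iff.mp (h ▸ Ideal.le_radical))
  refine ⟨hrad0, le_antisymm ?_ (s.le_contract hrad0)⟩
  intro r hr
  have hr' : algebraMap R K r ∈ s.star (Submodule.map (Algebra.linearMap R K) J.radical) := hr
  obtain ⟨F, hFfg, hF0, hFle, hxF⟩ :=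
    (hs _ (mapf_ne_bot hrad0) (algebraMap R K r)).mp hr'
  obtain ⟨T, hT⟩ := hFfg
  have hTmem : ∀ t ∈ T, ∃ r₀ ∈ J.radical, algebraMap R K r₀ = t := by
    intro t ht
    have : t ∈ Submodule.map (Algebra.linearMap R K) J.radical :=
      hFle (hT ▸ Submodule.subset_span ht)
    obtain ⟨r₀, hr₀, hr₀'⟩ := this
    exact ⟨r₀, hr₀, hr₀'⟩
  choose g hg1 hg2 using hTmem
  set F₀ : Ideal R := Ideal.span (Set.range fun t : T => g t t.2) with hF₀
  have hF₀fg : F₀.FG := Submodule.fg_span (Set.finite_range _)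
  have hF₀rad : F₀ ≤ J.radical := by
    rw [hF₀, Ideal.span_le]
    rintro x ⟨t, rfl⟩
    exact hg1 t t.2
  have hFmap : F ≤ Submodule.map (Algebra.linearMap R K) F₀ := by
    rw [← hT, Submodule.span_le]
    intro t ht
    exact ⟨g t ht, Ideal.subset_span ⟨⟨t, ht⟩, rfl⟩, hg2 t ht⟩
  have hF₀0 : F₀ ≠ ⊥ := by
    intro h
    apply hF0
    rw [h, Submodule.map_bot] at hFmap
    exact le_bot_iff.mp hFmap
  obtain ⟨n, hn⟩ := Ideal.exists_pow_le_of_le_radical_of_fg hF₀rad hF₀fg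
  have hn' : F₀ ^ (n + 1) ≤ J := le_trans (Ideal.pow_le_pow_right (Nat.le_succ n)) hn
  -- now push the element through
  have hx1 : algebraMap R K r ∈ s.star (Submodule.map (Algebra.linearMap R K) F₀) :=
    s.mono _ _ hF0 hFmap hxF
  have hx2 : (algebraMap R K r) ^ (n + 1) ∈
      (s.star (Submodule.map (Algebra.linearMap R K) F₀)) ^ (n + 1) :=
    Submodule.pow_mem_pow _ hx1 _
  have hx3 : (algebraMap R K r) ^ (n + 1) ∈
      s.star ((Submodule.map (Algebra.linearMap R K) F₀) ^ (n + 1)) :=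
    s.star_pow_le (mapf_ne_bot hF₀0) n hx2
  have hle : (Submodule.map (Algebra.linearMap R K) F₀) ^ (n + 1) ≤
      Submodule.map (Algebra.linearMap R K) J := by
    rw [← map_ideal_pow]
    exact Submodule.map_mono hn'
  have hx4 : (algebraMap R K r) ^ (n + 1) ∈ s.star (Submodule.map (Algebra.linearMap R K) J) :=
    s.mono _ _ (pow_ne_bot (mapf_ne_bot hF₀0) _) hle hx3
  have hx5 : r ^ (n + 1) ∈ s.contract J := by
    show algebraMap R K (r ^ (n + 1)) ∈ s.star _
    rw [map_pow]
    exact hx4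
  rw [hJc] at hx5
  exact Ideal.mem_radical_iff.mpr ⟨n + 1, hx5⟩

end SemistarOperation


/-- Let `⋆` be a semistar operation of finite type on the integral domain `R`.  If
`R` satisfies the a.c.c. on radical quasi-`⋆`-ideals, then `⋆-Min(I)` is finite for
every nonzero ideal `I` of `R`. -/
theorem starMin_finite_of_acc_radical_quasiStarIdeals {R K : Type*} [CommRing R]
    [IsDomain R] [Field K] [Algebra R K] [IsFractionRing R K]
    (s : SemistarOperation R K) (hs : s.FiniteType)
    (hacc : ∀ f : ℕ →o Ideal R, (∀ n, s.IsQuasiStarIdeal (f n) ∧ (f n).radical = f n) →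
      ∃ n, ∀ m, n ≤ m → f m = f n) :
    ∀ I : Ideal R, I ≠ ⊥ → (s.starMin I).Finite := by
  classical
  set S : Set (Ideal R) := {J | s.IsQuasiStarIdeal J ∧ J.radical = J} with hSdef
  have hwf : WellFounded ((· > ·) : S → S → Prop) := by
    refine (wellFoundedGT_iff_monotone_chain_condition (α := S)).mpr ?_ |>.wf
    intro a
    obtain ⟨n, hn⟩ := hacc ⟨fun n => (a n : Ideal R), fun i j h => a.mono h⟩ (fun n => (a n).2)
    exact ⟨n, fun m hm => Subtype.ext (hn m hm).symm⟩
  have key : ∀ J : S, (s.starMin (J : Ideal R)).Finite := by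
    intro J₀
    refine hwf.induction (C := fun J : S => (s.starMin (J : Ideal R)).Finite) J₀ ?_
    rintro ⟨J, hJS⟩ IH
    obtain ⟨hJq, hJr⟩ := hJS
    by_cases hT : J = ⊤
    · refine Set.finite_empty.subset ?_
      rintro P ⟨⟨hPp, _, hle⟩, -⟩
      subst hT
      exact absurd (top_le_iff.mp hle) hPp.ne_top
    by_cases hP : J.IsPrime
    · refine (Set.finite_singleton J).subset ?_
      rintro P ⟨⟨hPp, hPq, hle⟩, hmin⟩
      have : P ≤ J := hmin ⟨hP, hJq, le_rfl⟩ hle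
      exact le_antisymm this hle
    · obtain ⟨a, b, hab, ha, hb⟩ : ∃ a b, a * b ∈ J ∧ a ∉ J ∧ b ∉ J := by
        by_contra hcon
        push_neg at hcon
        refine hP ⟨hT, fun {x y} hxy => ?_⟩
        by_cases hx : x ∈ J
        · exact Or.inl hx
        · exact Or.inr (hcon x y hxy hx)
      have step : ∀ c : R, c ∉ J → ∃ J' : S, ((⟨J, ⟨hJq, hJr⟩⟩ : S) < J') ∧
          ∀ P : Ideal R, P.IsPrime → s.IsQuasiStarIdeal P → J ≤ P → c ∈ P →
            (J' : Ideal R) ≤ P := by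
        intro c hc
        have hJc0 : J ⊔ Ideal.span {c} ≠ ⊥ := fun h => hJq.1 (le_bot_iff.mp (h ▸ le_sup_left))
        have hq := s.radical_isQuasi hs (s.contract_isQuasi hJc0)
        have hcmem : c ∈ (s.contract (J ⊔ Ideal.span {c})).radical :=
          Ideal.le_radical (s.le_contract hJc0
            (Ideal.mem_sup_right (Ideal.subset_span (Set.mem_singleton c))))
        refine ⟨⟨(s.contract (J ⊔ Ideal.span {c})).radical, hq, Ideal.radical_idem _⟩, ?_, ?_⟩
        · rw [Subtype.mk_lt_mk]
          refine lt_of_le_of_ne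
            (le_trans le_sup_left (le_trans (s.le_contract hJc0) Ideal.le_radical)) ?_
          intro h
          exact hc (h ▸ hcmem)
        · intro P hPp hPq hJP hcP
          have h1 : J ⊔ Ideal.span {c} ≤ P :=
            sup_le hJP (Ideal.span_le.mpr (Set.singleton_subset_iff.mpr hcP))
          have h2 : s.contract (J ⊔ Ideal.span {c}) ≤ P := by
            have := s.contract_mono hJc0 h1
            rwa [hPq.2] at this
          calc (s.contract (J ⊔ Ideal.span {c})).radical ≤ P.radical := Ideal.radical_mono h2
            _ = P := hPp.radical
      obtain ⟨Ja, hJa, hJa2⟩ := step a ha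
      obtain ⟨Jb, hJb, hJb2⟩ := step b hb
      refine ((IH Ja hJa).union (IH Jb hJb)).subset ?_
      rintro P ⟨⟨hPp, hPq, hle⟩, hmin⟩
      rcases hPp.mem_or_mem (hle hab) with haP | hbP
      · refine Or.inl ⟨⟨hPp, hPq, hJa2 P hPp hPq hle haP⟩, fun y hy hyP => ?_⟩
        exact hmin ⟨hy.1, hy.2.1, le_trans (le_of_lt hJa) hy.2.2⟩ hyP
      · refine Or.inr ⟨⟨hPp, hPq, hJb2 P hPp hPq hle hbP⟩, fun y hy hyP => ?_⟩
        exact hmin ⟨hy.1, hy.2.1, le_trans (le_of_lt hJb) hy.2.2⟩ hyP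
  intro I hI
  have hq := s.radical_isQuasi hs (s.contract_isQuasi hI)
  have hmem : (s.contract I).radical ∈ S := ⟨hq, Ideal.radical_idem _⟩
  have hiff : ∀ P : Ideal R, P.IsPrime → s.IsQuasiStarIdeal P →
      (I ≤ P ↔ (s.contract I).radical ≤ P) := by
    intro P hPp hPq
    constructor
    · intro h
      have h2 : s.contract I ≤ P := by
        have := s.contract_mono hI h
        rwa [hPq.2] at this
      calc (s.contract I).radical ≤ P.radical := Ideal.radical_mono h2
        _ = P := hPp.radical
    · intro h
      exact le_trans (le_trans (s.le_contract hI) Ideal.le_radical) h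
  have heq : s.starMin I = s.starMin (s.contract I).radical := by
    ext P
    constructor
    · rintro ⟨⟨h1, h2, h3⟩, hmin⟩
      exact ⟨⟨h1, h2, (hiff P h1 h2).mp h3⟩,
        fun y hy hyP => hmin ⟨hy.1, hy.2.1, (hiff y hy.1 hy.2.1).mpr hy.2.2⟩ hyP⟩
    · rintro ⟨⟨h1, h2, h3⟩, hmin⟩
      exact ⟨⟨h1, h2, (hiff P h1 h2).mpr h3⟩,
        fun y hy hyP => hmin ⟨hy.1, hy.2.1, (hiff y hy.1 hy.2.1).mp hy.2.2⟩ hyP⟩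
  rw [heq]
  exact key ⟨_, hmem⟩
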